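/- arXiv:2405.20678 — 2 statements merged into one kernel-verified Lean document; each statement's English description precedes it below -/
import Mathlib

section
/- For all x ∈ (0,1) and α ∈ (0,1) satisfying 1 + x·ln α ≥ 0, we have (1 − α^x)/x ≥ −(ln α)/2. -/
theorem one_sub_rpow_div_ge (x α : ℝ) (hx : 0 < x) (hx1 : x < 1)
    (hα : 0 < α) (hα1 : α < 1) (h : 1 + x * Real.log α ≥ 0) :
    (1 - α ^ x) / x ≥ -(Real.log α) / 2 := by
  have hlog : Real.log α < 0 := Real.log_neg hα hα1
  set s : ℝ := -(x * Real.log α) with hs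
  have hs0 : 0 ≤ s := by nlinarith
  have hs1 : s ≤ 1 := by simp only [hs]; linarith
  have hrw : α ^ x = Real.exp (-s) := by
    rw [Real.rpow_def_of_pos hα, hs, neg_neg, mul_comm]
  have h1 : (1 : ℝ) + s ≤ Real.exp s := by linarith [Real.add_one_le_exp s]
  have hpos : (0:ℝ) < 1 + s := by linarith
  have h2 : Real.exp (-s) ≤ 1 / (1 + s) := by
    rw [Real.exp_neg, le_div_iff₀ hpos, inv_mul_eq_div, div_le_one (Real.exp_pos s)]
    linarith
  have h3 : 1 / (1 + s) ≤ 1 - s / 2 := by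
    rw [div_le_iff₀ hpos]; nlinarith
  have key : Real.exp (-s) ≤ 1 - s / 2 := le_trans h2 h3
  rw [ge_iff_le, div_le_div_iff₀ (by norm_num : (0:ℝ) < 2) hx] at *
  rw [hrw]
  nlinarith
end

section
/- Let p be a sequence of reals with p_τ ∈ [0,1] for all τ, and define N_t = 1 + (1/2)·∑_{τ=1}^{t} p_τ. Then for every T ≥ 1, ∑_{t=1}^T p_t / N_t ≤ 2·log(T + 2). -/
theorem sum_p_over_N_le (T : ℕ) (hT : 1 ≤ T) (p : ℕ → ℝ)
    (hp : ∀ τ, 0 ≤ p τ ∧ p τ ≤ 1) :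
    ∑ t ∈ Finset.Icc 1 T, p t / (1 + (1 / 2) * ∑ τ ∈ Finset.Icc 1 t, p τ)
      ≤ 2 * Real.log (T + 2) := by
  set N : ℕ → ℝ := fun t => 1 + (1 / 2) * ∑ τ ∈ Finset.Icc 1 t, p τ with hN
  have hS : ∀ t, 0 ≤ ∑ τ ∈ Finset.Icc 1 t, p τ :=
    fun t => Finset.sum_nonneg fun τ _ => (hp τ).1
  have hNpos : ∀ t, 0 < N t := by
    intro t
    have := hS t
    simp only [hN]
    linarith
  have hdiff : ∀ n : ℕ, N (n + 1) = N n + p (n + 1) / 2 := by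
    intro n
    simp only [hN, Finset.sum_Icc_succ_top (by omega : 1 ≤ n + 1)]
    ring
  have hNle : N T ≤ T + 2 := by
    have hST : (∑ τ ∈ Finset.Icc 1 T, p τ) ≤ T := by
      calc (∑ τ ∈ Finset.Icc 1 T, p τ) ≤ ∑ τ ∈ Finset.Icc 1 T, (1 : ℝ) :=
            Finset.sum_le_sum fun τ _ => (hp τ).2
        _ = T := by simp
    simp only [hN]
    have : (0 : ℝ) ≤ T := Nat.cast_nonneg T
    linarith
  have hN0 : N 0 = 1 := by simp [hN]
  clear_value N
  have key : ∀ n : ℕ, ∑ t ∈ Finset.Icc 1 n, p t / N t ≤ 2 * Real.log (N n) := by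
    intro n
    induction n with
    | zero => simp [hN0]
    | succ n ih =>
      rw [Finset.sum_Icc_succ_top (by omega : 1 ≤ n + 1)]
      have hNn := hNpos n
      have hNs := hNpos (n + 1)
      have hstep : p (n + 1) / N (n + 1) ≤ 2 * (Real.log (N (n + 1)) - Real.log (N n)) := by
        have hlog : Real.log (N n / N (n + 1)) ≤ N n / N (n + 1) - 1 :=
          Real.log_le_sub_one_of_pos (div_pos hNn hNs)
        rw [Real.log_div (ne_of_gt hNn) (ne_of_gt hNs)] at hlog
        have h1 : 1 - N n / N (n + 1) = (p (n + 1) / 2) / N (n + 1) := by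
          rw [hdiff n] at hNs ⊢
          rw [eq_div_iff (ne_of_gt hNs), sub_mul, one_mul,
            div_mul_cancel₀ _ (ne_of_gt hNs)]
          ring
        have h2 : p (n + 1) / N (n + 1) = 2 * ((p (n + 1) / 2) / N (n + 1)) := by
          ring
        rw [h2, ← h1]
        linarith
      linarith
  have hfin : Real.log (N T) ≤ Real.log (T + 2) := Real.log_le_log (hNpos T) hNle
  calc ∑ t ∈ Finset.Icc 1 T, p t / (1 + (1 / 2) * ∑ τ ∈ Finset.Icc 1 t, p τ)
      = ∑ t ∈ Finset.Icc 1 T, p t / N t := by rw [hN]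
    _ ≤ 2 * Real.log (N T) := key T
    _ ≤ 2 * Real.log (T + 2) := by linarith
end
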